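/- arXiv:quant-ph/0405192 — 3 statements merged into one kernel-verified Lean document; each statement's English description precedes it below -/
import Mathlib

section
/- Let ν = N/M be rational with N, M coprime positive integers, N < M, and let R_ν be the rotation R_ν(x) = x + 2πν (mod 2π) on [0,2π). For the equi-partition of [0,2π) into M intervals B_k = [2π(k-1)/M, 2πk/M), k = 1,…,M, the entropic chaos degree vanishes: D = Σ_{i,j} p_{ij} log(p_i / p_{ij}) = 0, where p_i = λ(B_i)/(2π) and p_{ij} = λ(B_i ∩ R_ν⁻¹(B_j))/(2π). -/
open MeasureTheory Real

/-- The rotation `R_ν(x) = x + 2πν (mod 2π)` on `[0, 2π)`. -/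
noncomputable def rot (ν x : ℝ) : ℝ :=
  2 * π * Int.fract ((x + 2 * π * ν) / (2 * π))

/-- The `k`-th cell `B_k = [2πk/M, 2π(k+1)/M)` (0-based) of the equi-partition of `[0,2π)`
into `M` intervals. -/
noncomputable def cell (M : ℕ) (k : Fin M) : Set ℝ :=
  Set.Ico (2 * π * ((k : ℕ) : ℝ) / M) (2 * π * (((k : ℕ) : ℝ) + 1) / M)

/-- The cell probability `p_i = λ(B_i)/(2π)`. -/
noncomputable def pC (M : ℕ) (i : Fin M) : ℝ :=
  (volume (cell M i)).toReal / (2 * π)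

/-- The joint probability `p_{ij} = λ(B_i ∩ R_ν⁻¹(B_j))/(2π)`. -/
noncomputable def pJ (ν : ℝ) (M : ℕ) (i j : Fin M) : ℝ :=
  (volume (cell M i ∩ rot ν ⁻¹' cell M j)).toReal / (2 * π)

lemma cell_disjoint {M : ℕ} {j k : Fin M} (hjk : j ≠ k) {x : ℝ}
    (hj : x ∈ cell M j) (hk : x ∈ cell M k) : False := by
  have hM : (0:ℝ) < M := Nat.cast_pos.mpr j.pos
  have hπ : (0:ℝ) < π := Real.pi_pos
  obtain ⟨hj1, hj2⟩ := hj
  obtain ⟨hk1, hk2⟩ := hk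
  rcases lt_or_gt_of_ne (fun h => hjk (Fin.ext h) : (j:ℕ) ≠ (k:ℕ)) with h | h
  · have h' : ((j:ℕ):ℝ) + 1 ≤ ((k:ℕ):ℝ) := by exact_mod_cast h
    have : 2 * π * (((j:ℕ):ℝ) + 1) / M ≤ 2 * π * ((k:ℕ):ℝ) / M := by gcongr
    linarith
  · have h' : ((k:ℕ):ℝ) + 1 ≤ ((j:ℕ):ℝ) := by exact_mod_cast h
    have : 2 * π * (((k:ℕ):ℝ) + 1) / M ≤ 2 * π * ((j:ℕ):ℝ) / M := by gcongr
    linarith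

lemma rot_mem_cell (N M : ℕ) (hNM : N < M) (i : Fin M) {x : ℝ} (hx : x ∈ cell M i) :
    rot ((N:ℝ)/M) x ∈ cell M ⟨((i:ℕ) + N) % M, Nat.mod_lt _ i.pos⟩ := by
  have hM : (0:ℝ) < M := Nat.cast_pos.mpr i.pos
  have hπ : (0:ℝ) < π := Real.pi_pos
  have hP : (0:ℝ) < 2*π*M := by positivity
  obtain ⟨hx1, hx2⟩ := hx
  have A1 : 2*π*((i:ℕ):ℝ) ≤ x * M := by rw [div_le_iff₀ hM] at hx1; linarith
  have A2 : x * M < 2*π*(((i:ℕ):ℝ)+1) := by rw [lt_div_iff₀ hM] at hx2; linarith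
  set u : ℝ := (x + 2 * π * ((N:ℝ)/M)) / (2 * π) with hu
  have e1 : u * (2*π) = x + 2*π*((N:ℝ)/M) := div_mul_cancel₀ _ (by positivity)
  have e2 : ((N:ℝ)/M)*M = N := div_mul_cancel₀ _ hM.ne'
  have hukey : u * (2*π*M) = x*M + 2*π*N := by linear_combination (M:ℝ) * e1 + 2*π*e2
  have hiM1 : ((i:ℕ):ℝ) + 1 ≤ M := by exact_mod_cast i.isLt
  have hiM : ((i:ℕ):ℝ) < M := by exact_mod_cast i.isLt
  have hNMr : ((N:ℝ)) < M := by exact_mod_cast hNM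
  by_cases hc : (i:ℕ) + N < M
  · have hmod : ((i:ℕ) + N) % M = (i:ℕ) + N := Nat.mod_eq_of_lt hc
    have hcr : ((i:ℕ):ℝ) + N + 1 ≤ M := by exact_mod_cast hc
    have hfr : Int.fract u = u := by
      apply Int.fract_eq_self.mpr
      constructor
      · nlinarith
      · nlinarith
    refine ⟨?_, ?_⟩ <;> simp only [rot, ← hu, hfr, hmod]
    · rw [div_le_iff₀ hM]; push_cast; linarith [hukey]
    · rw [lt_div_iff₀ hM]; push_cast; linarith [hukey]
  · push_neg at hc
    have hmod : ((i:ℕ) + N) % M = (i:ℕ) + N - M := by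
      rw [Nat.mod_eq_sub_mod hc, Nat.mod_eq_of_lt]; omega
    have hcast : (((i:ℕ) + N - M : ℕ) : ℝ) = ((i:ℕ):ℝ) + N - M := by
      push_cast [Nat.cast_sub hc]; ring
    have hcr : (M:ℝ) ≤ ((i:ℕ):ℝ) + N := by exact_mod_cast hc
    have hfr : Int.fract u = u - 1 := by
      have e : Int.fract u = Int.fract (u - 1) := by
        rw [show u - (1:ℝ) = u - ((1:ℤ):ℝ) by norm_num, Int.fract_sub_intCast]
      rw [e]
      apply Int.fract_eq_self.mpr
      constructor
      · nlinarith [hukey, A1, hP, hcr]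
      · nlinarith [hukey, A2, hP, hiM1, hNMr]
    refine ⟨?_, ?_⟩ <;> simp only [rot, ← hu, hfr, hmod, hcast]
    · rw [div_le_iff₀ hM]; linarith [hukey]
    · rw [lt_div_iff₀ hM]; linarith [hukey]

lemma inter_cell (N M : ℕ) (hNM : N < M) (i j : Fin M) :
    cell M i ∩ rot ((N:ℝ)/M) ⁻¹' cell M j =
      if j = ⟨((i:ℕ) + N) % M, Nat.mod_lt _ i.pos⟩ then cell M i else ∅ := by
  split_ifs with h
  · subst h
    ext x
    exact ⟨fun hx => hx.1, fun hx => ⟨hx, rot_mem_cell N M hNM i hx⟩⟩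
  · ext x
    simp only [Set.mem_inter_iff, Set.mem_preimage, Set.mem_empty_iff_false, iff_false]
    rintro ⟨hx, hrx⟩
    exact cell_disjoint h hrx (rot_mem_cell N M hNM i hx)

/-- Theorem 4.1(1): for a rational rotation `ν = N/M` (with `N, M` coprime, `0 < N < M`)
and the equi-partition of `[0,2π)` into `M` intervals, the entropic chaos degree
`D = Σ_{i,j} p_{ij} log(p_i / p_{ij})` vanishes. -/
theorem ecd_rational_rotation_equipartition_eq_zero
    (N M : ℕ) (hN : 0 < N) (hNM : N < M) (hcop : Nat.Coprime N M) :
    ∑ i : Fin M, ∑ j : Fin M,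
      pJ ((N : ℝ) / M) M i j * Real.log (pC M i / pJ ((N : ℝ) / M) M i j) = 0 := by
  apply Finset.sum_eq_zero
  intro i _
  apply Finset.sum_eq_zero
  intro j _
  have hM : (0:ℝ) < M := Nat.cast_pos.mpr i.pos
  have hπ : (0:ℝ) < π := Real.pi_pos
  by_cases h : j = (⟨((i:ℕ) + N) % M, Nat.mod_lt _ i.pos⟩ : Fin M)
  · have hJ : pJ ((N:ℝ)/M) M i j = pC M i := by
      unfold pJ pC
      rw [inter_cell N M hNM i j, if_pos h]
    rw [hJ]
    have hpos : pC M i ≠ 0 := by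
      unfold pC cell
      rw [Real.volume_Ico]
      have hd : 2*π*(((i:ℕ):ℝ)+1)/M - 2*π*((i:ℕ):ℝ)/M = 2*π/M := by field_simp; ring
      rw [hd, ENNReal.toReal_ofReal (by positivity)]
      positivity
    rw [div_self hpos, Real.log_one, mul_zero]
  · have hJ : pJ ((N:ℝ)/M) M i j = 0 := by
      unfold pJ
      rw [inter_cell N M hNM i j, if_neg h]
      simp
    rw [hJ, zero_mul]
end

section
/- Let ν be irrational and R_ν(x) = x + 2πν (mod 2π) the rotation of [0,2π). For every finite measurable partition {B_1,…,B_L} of [0,2π) with L ≥ 2 and λ(B_i) > 0 for all i, the entropic chaos degree is strictly positive: D = Σ_{i,j} p_{ij} log(p_i / p_{ij}) > 0, where p_i = λ(B_i)/(2π) and p_{ij} = λ(B_i ∩ R_ν⁻¹(B_j))/(2π). -/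
open MeasureTheory Real

open Set AddCircle in
/-- A measurable set of the circle that is a.e. invariant under a rotation of infinite order
is null or conull (ergodicity of irrational rotations, via Fourier coefficients). -/
theorem invariant_trivial' {T : ℝ} [hT : Fact (0 < T)] (a : AddCircle T)
    (ha : ∀ n : ℤ, n ≠ 0 → n • a ≠ 0)
    {A : Set (AddCircle T)} (hA : MeasurableSet A)
    (hinv : (fun x => x + a) ⁻¹' A =ᵐ[(volume : Measure (AddCircle T))] A) :
    volume A = 0 ∨ volume A = ENNReal.ofReal T := by
  have hvol : (volume : Measure (AddCircle T)) = ENNReal.ofReal T • haarAddCircle :=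
    volume_eq_smul_haarAddCircle
  set μ : Measure (AddCircle T) := (haarAddCircle : Measure (AddCircle T)) with hμ
  have hTne : (ENNReal.ofReal T) ≠ 0 := by
    simp [ENNReal.ofReal_eq_zero, not_le, hT.out]
  have hinvμ : (fun x => x + a) ⁻¹' A =ᵐ[μ] A := by
    have : ∀ s : Set (AddCircle T), volume s = 0 → μ s = 0 := by
      intro s hs
      rw [hvol, Measure.smul_apply, smul_eq_mul] at hs
      simpa [hTne] using hs
    rw [Filter.eventuallyEq_set] at hinv ⊢
    rw [MeasureTheory.ae_iff] at hinv ⊢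
    exact this _ hinv
  have hAfin : μ A ≠ ⊤ := measure_ne_top μ A
  set F : Lp ℂ 2 μ := indicatorConstLp 2 hA hAfin (1 : ℂ) with hF
  have hFcoe : (F : AddCircle T → ℂ) =ᵐ[μ] A.indicator (fun _ => (1 : ℂ)) :=
    indicatorConstLp_coeFn
  have hmp : MeasurePreserving (fun x : AddCircle T => x + a) μ μ :=
    measurePreserving_add_right μ a
  have h4 : (fun x : AddCircle T => A.indicator (fun _ => (1:ℂ)) (x + a))
      =ᵐ[μ] A.indicator (fun _ => (1:ℂ)) := by
    have h := hinvμ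
    rw [Filter.eventuallyEq_set] at h
    filter_upwards [h] with x hx
    simp only [Set.mem_preimage] at hx
    by_cases h' : x ∈ A
    · rw [Set.indicator_of_mem (hx.mpr h'), Set.indicator_of_mem h']
    · rw [Set.indicator_of_notMem (fun c => h' (hx.mp c)), Set.indicator_of_notMem h']
  have hcoeff : ∀ n : ℤ, n ≠ 0 → fourierCoeff (F : AddCircle T → ℂ) n = 0 := by
    intro n hn
    have h3 : ∀ x : AddCircle T,
        fourier (-n) (x + a) = fourier (-n) x * fourier (-n) a := by
      intro x
      simp only [fourier_apply]
      rw [zsmul_add, AddCircle.toCircle_add, Circle.coe_mul]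
    have hstep : fourierCoeff (F : AddCircle T → ℂ) n
        = ∫ x, fourier (-n) x • A.indicator (fun _ => (1:ℂ)) x ∂μ := by
      apply integral_congr_ae
      filter_upwards [hFcoe] with x hx
      show _ • _ = _ • _
      rw [hx]
    have key : fourierCoeff (F : AddCircle T → ℂ) n
        = fourier (-n) a * fourierCoeff (F : AddCircle T → ℂ) n := by
      calc fourierCoeff (F : AddCircle T → ℂ) n
          = ∫ x, fourier (-n) x • A.indicator (fun _ => (1:ℂ)) x ∂μ := hstep
        _ = ∫ x, fourier (-n) (x + a) • A.indicator (fun _ => (1:ℂ)) (x + a) ∂μ :=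
            (hmp.integral_comp (MeasurableEquiv.addRight a).measurableEmbedding
              (fun y => fourier (-n) y • A.indicator (fun _ => (1:ℂ)) y)).symm
        _ = fourier (-n) a * ∫ x, fourier (-n) x • A.indicator (fun _ => (1:ℂ)) x ∂μ := by
            rw [← integral_const_mul]
            apply integral_congr_ae
            filter_upwards [h4] with x hx
            rw [h3 x, hx]
            simp only [smul_eq_mul]
            ring
        _ = fourier (-n) a * fourierCoeff (F : AddCircle T → ℂ) n := by rw [hstep]
    by_contra hc
    have h1 : (fourier (-n) a : ℂ) = 1 := by
      have := mul_right_cancel₀ hc (by linear_combination key : (1:ℂ) * fourierCoeff (F : AddCircle T → ℂ) n = fourier (-n) a * fourierCoeff (F : AddCircle T → ℂ) n)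
      exact this.symm
    have h0 : ((-n) • a : AddCircle T) = 0 := by
      apply AddCircle.injective_toCircle (T := T) hT.out.ne'
      apply Subtype.coe_injective
      show ((toCircle ((-n) • a) : Circle) : ℂ) = ((toCircle (0 : AddCircle T) : Circle) : ℂ)
      rw [← fourier_apply, h1, fourier_zero']
    exact ha (-n) (by simpa using hn) h0
  -- Parseval
  have parseval := tsum_sq_fourierCoeff F
  have htsum : ∑' i : ℤ, ‖fourierCoeff (F : AddCircle T → ℂ) i‖ ^ 2
      = ‖fourierCoeff (F : AddCircle T → ℂ) 0‖ ^ 2 := by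
    apply tsum_eq_single
    intro n hn
    rw [hcoeff n hn]
    simp
  have hc0 : fourierCoeff (F : AddCircle T → ℂ) 0 = ((μ A).toReal : ℂ) := by
    rw [fourierCoeff]
    have : ∀ᵐ x ∂μ, fourier (-(0:ℤ)) x • (F : AddCircle T → ℂ) x
        = A.indicator (fun _ => (1:ℂ)) x := by
      filter_upwards [hFcoe] with x hx
      rw [neg_zero, fourier_zero, one_smul, hx]
    rw [integral_congr_ae this, integral_indicator_const _ hA]
    simp
    rfl
  have hrhs : ∫ t, ‖(F : AddCircle T → ℂ) t‖ ^ 2 ∂μ = (μ A).toReal := by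
    have : ∀ᵐ t ∂μ, ‖(F : AddCircle T → ℂ) t‖ ^ 2 = A.indicator (fun _ => (1:ℝ)) t := by
      filter_upwards [hFcoe] with t ht
      rw [ht]
      by_cases h : t ∈ A <;> simp [Set.indicator_apply, h]
    rw [integral_congr_ae this, integral_indicator_const _ hA]
    simp
    rfl
  rw [htsum, hc0, hrhs] at parseval
  have hr : (μ A).toReal ^ 2 = (μ A).toReal := by
    conv_rhs => rw [← parseval]
    rw [Complex.norm_real, Real.norm_eq_abs, sq_abs]
  have htriv : (μ A).toReal = 0 ∨ (μ A).toReal = 1 := by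
    rcases mul_eq_zero.mp (show (μ A).toReal * ((μ A).toReal - 1) = 0 by ring_nf; nlinarith [hr]) with h | h
    · exact Or.inl h
    · exact Or.inr (by linarith [sub_eq_zero.mp h])
  have hμA : μ A = 0 ∨ μ A = 1 := by
    rcases htriv with h | h
    · exact Or.inl ((ENNReal.toReal_eq_zero_iff _).mp h |>.resolve_right hAfin)
    · exact Or.inr (by rw [← ENNReal.ofReal_toReal hAfin, h]; simp)
  rw [hvol]
  rcases hμA with h | h
  · left; rw [Measure.smul_apply, smul_eq_mul, h, mul_zero]
  · right; rw [Measure.smul_apply, smul_eq_mul, h, mul_one]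

open Set AddCircle in
/-- Theorem 4.1(2): for an irrational rotation `R_ν` and any finite measurable partition
`{B_1,…,B_L}` of `[0,2π)` with `L ≥ 2` and all cells of positive measure, the entropic
chaos degree `D = Σ_{i,j} p_{ij} log(p_i / p_{ij})` is strictly positive, where
`p_i = λ(B_i)/(2π)` and `p_{ij} = λ(B_i ∩ R_ν⁻¹(B_j))/(2π)`. -/
theorem ecd_irrational_rotation_pos
    (ν : ℝ) (hν : Irrational ν) (L : ℕ) (hL : 2 ≤ L) (B : Fin L → Set ℝ)
    (hmeas : ∀ i, MeasurableSet (B i))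
    (hdisj : ∀ i j, i ≠ j → Disjoint (B i) (B j))
    (hcover : (⋃ i, B i) = Set.Ico 0 (2 * π))
    (hpos : ∀ i, 0 < volume (B i)) :
    0 < ∑ i : Fin L, ∑ j : Fin L,
        (volume (B i ∩ rot ν ⁻¹' B j)).toReal / (2 * π) *
          Real.log (((volume (B i)).toReal / (2 * π)) /
            ((volume (B i ∩ rot ν ⁻¹' B j)).toReal / (2 * π))) := by
  have hπ : (0:ℝ) < 2 * π := by positivity
  haveI : Fact ((0:ℝ) < 2 * π) := ⟨hπ⟩
  set c : ℝ := 2 * π * ν with hc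
  -- basic measurability of rot
  have hrotmeas : Measurable (rot ν) :=
    (measurable_const.mul (measurable_fract.comp ((measurable_id.add_const c).div_const _)))
  have hrot_mem : ∀ x, rot ν x ∈ Ico 0 (2 * π) := by
    intro x
    constructor
    · exact mul_nonneg hπ.le (Int.fract_nonneg _)
    · have := Int.fract_lt_one ((x + c) / (2 * π))
      calc 2 * π * Int.fract ((x + c) / (2 * π)) < 2 * π * 1 := by
            exact (mul_lt_mul_iff_right₀ hπ).mpr this
        _ = 2 * π := mul_one _
  have hBsub : ∀ i, B i ⊆ Ico 0 (2 * π) := fun i => hcover ▸ Set.subset_iUnion B i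
  -- the circle picture
  set q : ℝ → AddCircle (2 * π) := QuotientAddGroup.mk with hq
  have hrep_mk : ∀ x : ℝ, ((equivIco (2 * π) 0 (q x) : ℝ)) = 2 * π * Int.fract (x / (2 * π)) := by
    intro x
    rw [AddCircle.coe_equivIco_mk_apply, mul_comm]
  set A : Fin L → Set (AddCircle (2 * π)) :=
    fun i => {z | ((equivIco (2 * π) 0 z : ℝ)) ∈ B i} with hA
  have hrepmeas : Measurable (fun z : AddCircle (2 * π) => ((equivIco (2 * π) 0 z : ℝ))) := by
    exact measurable_subtype_coe.comp (measurableEquivIco (2 * π) 0).measurable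
  have hAmeas : ∀ i, MeasurableSet (A i) := fun i => hrepmeas (hmeas i)
  have hAdisj : ∀ i j, i ≠ j → Disjoint (A i) (A j) := by
    intro i j hij
    rw [Set.disjoint_left]
    intro z hzi hzj
    exact Set.disjoint_left.mp (hdisj i j hij) hzi hzj
  -- rot preimage via the circle
  have hpre : ∀ j, rot ν ⁻¹' B j = q ⁻¹' ((fun z => z + (c : AddCircle (2 * π))) ⁻¹' A j) := by
    intro j
    ext x
    simp only [Set.mem_preimage, hA, Set.mem_setOf_eq]
    have : (q x + (c : AddCircle (2 * π))) = q (x + c) := by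
      rw [hq]; norm_cast
    rw [this, hrep_mk (x + c)]
    rw [rot, hc]
  -- projection respects measure, with Ioo cleanup
  have hproj : ∀ S : Set (AddCircle (2 * π)), MeasurableSet S →
      volume S = volume (q ⁻¹' S ∩ Ioc 0 (2 * π)) := by
    intro S hS
    have := AddCircle.add_projection_respects_measure (2 * π) (0:ℝ) hS
    rwa [zero_add] at this
  have hIooIoc : ∀ W : Set ℝ, volume (W ∩ Ioc 0 (2 * π)) = volume (W ∩ Ioo 0 (2 * π)) := by
    intro W
    apply le_antisymm
    · calc volume (W ∩ Ioc 0 (2 * π)) ≤ volume ((W ∩ Ioo 0 (2 * π)) ∪ {2 * π}) := by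
            apply measure_mono
            rintro x ⟨hw, hx1, hx2⟩
            rcases lt_or_eq_of_le hx2 with h | h
            · exact Or.inl ⟨hw, hx1, h⟩
            · exact Or.inr (by simp [h])
        _ ≤ volume (W ∩ Ioo 0 (2 * π)) + volume ({2 * π} : Set ℝ) := measure_union_le _ _
        _ = volume (W ∩ Ioo 0 (2 * π)) := by simp
    · exact measure_mono (Set.inter_subset_inter_right _ Ioo_subset_Ioc_self)
  have hIooIco : ∀ W : Set ℝ, volume (W ∩ Ico 0 (2 * π)) = volume (W ∩ Ioo 0 (2 * π)) := by
    intro W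
    apply le_antisymm
    · calc volume (W ∩ Ico 0 (2 * π)) ≤ volume ((W ∩ Ioo 0 (2 * π)) ∪ {0}) := by
            apply measure_mono
            rintro x ⟨hw, hx1, hx2⟩
            rcases lt_or_eq_of_le hx1 with h | h
            · exact Or.inl ⟨hw, h, hx2⟩
            · exact Or.inr (by simp [← h])
        _ ≤ volume (W ∩ Ioo 0 (2 * π)) + volume ({0} : Set ℝ) := measure_union_le _ _
        _ = volume (W ∩ Ioo 0 (2 * π)) := by simp
    · exact measure_mono (Set.inter_subset_inter_right _ Ioo_subset_Ico_self)
  -- q ⁻¹' A i agrees with B i on Ioo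
  have hqA : ∀ i, q ⁻¹' (A i) ∩ Ioo 0 (2 * π) = B i ∩ Ioo 0 (2 * π) := by
    intro i
    ext x
    simp only [Set.mem_inter_iff, Set.mem_preimage, hA, Set.mem_setOf_eq, and_congr_left_iff]
    intro hx
    rw [hrep_mk x, Int.fract_eq_self.mpr ⟨div_nonneg hx.1.le hπ.le,
      (div_lt_one hπ).mpr hx.2⟩]
    rw [mul_comm, div_mul_cancel₀ _ hπ.ne']
  -- volume of A i equals volume of B i
  have hvolA : ∀ i, volume (A i) = volume (B i) := by
    intro i
    rw [hproj _ (hAmeas i), hIooIoc, hqA]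
    rw [← hIooIco]
    rw [Set.inter_eq_self_of_subset_left (hBsub i)]
  -- notation for the joint measures
  set m : Fin L → Fin L → ENNReal := fun i j => volume (B i ∩ rot ν ⁻¹' B j) with hm
  have hBfin : ∀ i, volume (B i) ≠ ⊤ := by
    intro i
    have : volume (B i) ≤ volume (Ico 0 (2 * π)) := measure_mono (hBsub i)
    rw [Real.volume_Ico] at this
    exact (lt_of_le_of_lt this ENNReal.ofReal_lt_top).ne
  have hmle : ∀ i j, m i j ≤ volume (B i) := fun i j =>
    measure_mono Set.inter_subset_left
  have hpremeas : ∀ j, MeasurableSet (rot ν ⁻¹' B j) := fun j => hrotmeas (hmeas j)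
  -- row sums
  have hrow : ∀ i, ∑ j, m i j = volume (B i) := by
    intro i
    have hU : B i = ⋃ j, B i ∩ rot ν ⁻¹' B j := by
      ext x
      simp only [Set.mem_iUnion, Set.mem_inter_iff, Set.mem_preimage]
      constructor
      · intro hx
        have : rot ν x ∈ ⋃ j, B j := hcover ▸ hrot_mem x
        rcases Set.mem_iUnion.mp this with ⟨j, hj⟩
        exact ⟨j, hx, hj⟩
      · rintro ⟨j, hj, _⟩; exact hj
    rw [hm]
    conv_rhs => rw [hU]
    rw [measure_iUnion ?_ (fun j => (hmeas i).inter (hpremeas j))]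
    · exact (tsum_fintype _).symm
    · intro j k hjk
      apply Set.disjoint_left.mpr
      rintro x ⟨_, hxj⟩ ⟨_, hxk⟩
      exact Set.disjoint_left.mp (hdisj j k hjk) hxj hxk
  -- column sums
  have hcol : ∀ j, ∑ i, m i j = volume (B j) := by
    intro j
    have hU : rot ν ⁻¹' B j ∩ Ico 0 (2 * π) = ⋃ i, B i ∩ rot ν ⁻¹' B j := by
      rw [Set.inter_comm, ← hcover, Set.iUnion_inter]
    have h1 : ∑ i, m i j = volume (rot ν ⁻¹' B j ∩ Ico 0 (2 * π)) := by
      rw [hU, measure_iUnion ?_ (fun i => (hmeas i).inter (hpremeas j))]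
      · exact (tsum_fintype _).symm
      · intro i k hik
        apply Set.disjoint_left.mpr
        rintro x ⟨hxi, _⟩ ⟨hxk, _⟩
        exact Set.disjoint_left.mp (hdisj i k hik) hxi hxk
    rw [h1, hIooIco, hpre j]
    have h2 : q ⁻¹' ((fun z => z + (c : AddCircle (2 * π))) ⁻¹' A j) ∩ Ioo 0 (2 * π)
        = q ⁻¹' ((fun z => z + (c : AddCircle (2 * π))) ⁻¹' A j) ∩ Ioc 0 (2 * π) ∩ Ioo 0 (2*π) := by
      rw [Set.inter_assoc, Set.inter_eq_self_of_subset_right Ioo_subset_Ioc_self]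
    have hτmeas : MeasurableSet ((fun z => z + (c : AddCircle (2 * π))) ⁻¹' A j) :=
      (measurable_add_const _) (hAmeas j)
    calc volume (q ⁻¹' ((fun z => z + (c : AddCircle (2 * π))) ⁻¹' A j) ∩ Ioo 0 (2 * π))
        = volume (q ⁻¹' ((fun z => z + (c : AddCircle (2 * π))) ⁻¹' A j) ∩ Ioc 0 (2 * π)) :=
          (hIooIoc _).symm
      _ = volume ((fun z => z + (c : AddCircle (2 * π))) ⁻¹' A j) := (hproj _ hτmeas).symm
      _ = volume (A j) := measure_preimage_add_right _ _ _
      _ = volume (B j) := hvolA j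
  -- key claim: some cell is split by the rotation
  have hsplit : ∃ i j, 0 < m i j ∧ m i j < volume (B i) := by
    by_contra hcon
    push_neg at hcon
    have hdich : ∀ i j, m i j = 0 ∨ m i j = volume (B i) := by
      intro i j
      rcases eq_or_ne (m i j) 0 with h | h
      · exact Or.inl h
      · exact Or.inr (le_antisymm (hmle i j) (hcon i j (pos_iff_ne_zero.mpr h)))
    have hex : ∀ i, ∃ j, m i j = volume (B i) := by
      intro i
      by_contra hno
      push_neg at hno
      have hz : ∀ j, m i j = 0 := fun j => (hdich i j).resolve_right (hno j)
      have h0 : volume (B i) = 0 := by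
        rw [← hrow i, Finset.sum_eq_zero (fun j _ => hz j)]
      exact absurd h0 (hpos i).ne'
    choose σ hσ using hex
    have hoff : ∀ i j, j ≠ σ i → m i j = 0 := by
      intro i j hj
      have hsum : volume (B i) + ∑ j' ∈ Finset.univ.erase (σ i), m i j' = volume (B i) := by
        conv_rhs => rw [← hrow i]
        rw [← Finset.add_sum_erase _ _ (Finset.mem_univ (σ i)), hσ i]
      have hrest : ∑ j' ∈ Finset.univ.erase (σ i), m i j' = 0 := by
        have := hsum
        rw [show volume (B i) = volume (B i) + 0 from (add_zero _).symm] at this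
        nth_rewrite 2 [← add_zero (volume (B i))] at hsum
        exact (ENNReal.add_right_inj (hBfin i)).mp hsum
      exact (Finset.sum_eq_zero_iff.mp hrest) j (Finset.mem_erase.mpr ⟨hj, Finset.mem_univ j⟩)
    have hsurj : Function.Surjective σ := by
      intro j
      by_contra hno
      push_neg at hno
      have h0 : volume (B j) = 0 := by
        rw [← hcol j]
        exact Finset.sum_eq_zero (fun i _ => hoff i j (fun h => hno i h.symm))
      exact absurd h0 (hpos j).ne'
    have hinj : Function.Injective σ := Finite.injective_iff_surjective.mpr hsurj
    set e : Equiv.Perm (Fin L) := Equiv.ofBijective σ ⟨hinj, hsurj⟩ with he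
    set k : ℕ := orderOf e with hk
    have hkpos : 0 < k := orderOf_pos e
    have hiterid : ∀ i, σ^[k] i = i := by
      intro i
      have h1 : ⇑e = σ := rfl
      have h2 : σ^[k] = ⇑(e ^ k) := by rw [← h1, ← Equiv.Perm.coe_pow]
      rw [h2, pow_orderOf_eq_one e]
      rfl
    -- a.e. inclusion on the circle
    have hAfin : ∀ i, volume (A i) ≠ ⊤ := fun i => (hvolA i) ▸ hBfin i
    have hnullR : ∀ i, volume (B i \ rot ν ⁻¹' B (σ i)) = 0 := by
      intro i
      have h : m i (σ i) + volume (B i \ rot ν ⁻¹' B (σ i)) = volume (B i) :=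
        measure_inter_add_diff (μ := (volume : Measure ℝ)) (B i) (hpremeas (σ i))
      rw [hσ i] at h
      nth_rewrite 2 [← add_zero (volume (B i))] at h
      exact (ENNReal.add_right_inj (hBfin i)).mp h
    have hinc : ∀ i, volume (A i \ (fun z => z + (c : AddCircle (2 * π))) ⁻¹' A (σ i)) = 0 := by
      intro i
      have hS : MeasurableSet (A i \ (fun z => z + (c : AddCircle (2 * π))) ⁻¹' A (σ i)) :=
        (hAmeas i).diff ((measurable_add_const _) (hAmeas (σ i)))
      rw [hproj _ hS, hIooIoc]
      apply measure_mono_null ?_ (hnullR i)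
      rintro x ⟨hx, hio⟩
      rw [Set.mem_preimage, Set.mem_diff] at hx
      constructor
      · have : x ∈ q ⁻¹' (A i) ∩ Ioo 0 (2 * π) := ⟨hx.1, hio⟩
        rw [hqA i] at this
        exact this.1
      · intro hmem
        exact hx.2 (by rw [hpre (σ i)] at hmem; exact hmem)
    -- iterate the inclusion
    have hiter : ∀ (n : ℕ) (i : Fin L),
        volume (A i \ (fun z => z + (n • (c : AddCircle (2 * π)))) ⁻¹' A (σ^[n] i)) = 0 := by
      intro n
      induction n with
      | zero =>
        intro i
        simp only [zero_smul, Function.iterate_zero, id_eq]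
        have : (fun z : AddCircle (2 * π) => z + 0) ⁻¹' A i = A i := by
          simp [Set.preimage_setOf_eq]
        rw [this]
        simp
      | succ n ih =>
        intro i
        have hsub : A i \ (fun z => z + ((n+1) • (c : AddCircle (2 * π)))) ⁻¹' A (σ^[n+1] i)
            ⊆ (A i \ (fun z => z + (c : AddCircle (2 * π))) ⁻¹' A (σ i))
              ∪ ((fun z => z + (c : AddCircle (2 * π))) ⁻¹'
                (A (σ i) \ (fun z => z + (n • (c : AddCircle (2 * π)))) ⁻¹' A (σ^[n] (σ i)))) := by
          rintro x ⟨hxA, hxN⟩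
          by_cases hmid : x + (c : AddCircle (2 * π)) ∈ A (σ i)
          · right
            refine ⟨hmid, ?_⟩
            intro hbad
            apply hxN
            rw [Set.mem_preimage] at hbad ⊢
            rw [Function.iterate_succ_apply]
            have harr : x + (n + 1) • (c : AddCircle (2 * π))
                = x + (c : AddCircle (2 * π)) + n • (c : AddCircle (2 * π)) := by
              rw [succ_nsmul']
              abel
            rw [harr]
            exact hbad
          · exact Or.inl ⟨hxA, hmid⟩
        apply measure_mono_null hsub
        apply measure_union_null (hinc i)
        rw [measure_preimage_add_right]
        exact ih (σ i)
    -- full invariance under k-fold rotation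
    set b : AddCircle (2 * π) := k • (c : AddCircle (2 * π)) with hb
    have hinv : ∀ i, (fun z => z + b) ⁻¹' A i =ᵐ[(volume : Measure (AddCircle (2*π)))] A i := by
      intro i
      have h1 : volume (A i \ (fun z => z + b) ⁻¹' A i) = 0 := by
        have := hiter k i
        rwa [hiterid i] at this
      have hXvol : volume ((fun z => z + b) ⁻¹' A i) = volume (A i) :=
        measure_preimage_add_right _ _ _
      have h2 : volume ((fun z => z + b) ⁻¹' A i \ A i) = 0 := by
        have hX : MeasurableSet ((fun z => z + b) ⁻¹' A i) :=
          (measurable_add_const _) (hAmeas i)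
        have e1 := measure_inter_add_diff (μ := (volume : Measure (AddCircle (2*π)))) (A i) hX
        have e2 := measure_inter_add_diff (μ := (volume : Measure (AddCircle (2*π)))) ((fun z => z + b) ⁻¹' A i) (hAmeas i)
        rw [h1, add_zero] at e1
        rw [hXvol] at e2
        rw [Set.inter_comm, e1] at e2
        nth_rewrite 2 [← add_zero (volume (A i))] at e2
        exact (ENNReal.add_right_inj (hAfin i)).mp e2
      exact MeasureTheory.ae_eq_set.mpr ⟨h2, h1⟩
    -- irrationality: b has infinite order
    have hbne : ∀ n : ℤ, n ≠ 0 → n • b ≠ 0 := by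
      intro n hn hzero
      have hcast : n • b = (((n * k : ℤ) * c : ℝ) : AddCircle (2 * π)) := by
        rw [hb]
        push_cast
        rw [← QuotientAddGroup.mk_nsmul, ← QuotientAddGroup.mk_zsmul]
        congr 1
        simp only [zsmul_eq_mul, nsmul_eq_mul]
        push_cast
        ring
      rw [hcast, AddCircle.coe_eq_zero_iff] at hzero
      obtain ⟨j, hj⟩ := hzero
      have h2πne : (2 * π : ℝ) ≠ 0 := hπ.ne'
      have hnk : ((n * k : ℤ) : ℝ) ≠ 0 := by
        simp only [ne_eq, Int.cast_eq_zero, mul_eq_zero]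
        push_neg
        exact ⟨hn, by exact_mod_cast hkpos.ne'⟩
      apply hν
      refine ⟨(j : ℚ) / ((n * k : ℤ) : ℚ), ?_⟩
      have hj' : (j : ℝ) * (2 * π) = ((n * k : ℤ) : ℝ) * (2 * π * ν) := by
        have := hj
        rw [zsmul_eq_mul] at this
        rw [this, hc]
      have : (j : ℝ) = ((n * k : ℤ) : ℝ) * ν := by
        have := mul_right_cancel₀ h2πne (by linarith [hj'] : (j:ℝ) * (2*π) = (((n*k:ℤ):ℝ) * ν) * (2*π))
        exact this
      have hnk' : ((n:ℝ) * (k:ℝ)) ≠ 0 := by push_cast at hnk; exact hnk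
      push_cast
      rw [div_eq_iff hnk']
      push_cast at this
      linear_combination this
    -- conclude triviality, contradiction
    have hfull : ∀ i, volume (A i) = ENNReal.ofReal (2 * π) := by
      intro i
      rcases invariant_trivial' b hbne (hAmeas i) (hinv i) with h | h
      · exfalso
        rw [hvolA i] at h
        exact absurd h (hpos i).ne'
      · exact h
    have hi01 : (⟨0, by omega⟩ : Fin L) ≠ ⟨1, by omega⟩ := by
      simp [Fin.ext_iff]
    have hun : volume (A ⟨0, by omega⟩ ∪ A ⟨1, by omega⟩)
        = ENNReal.ofReal (2 * π) + ENNReal.ofReal (2 * π) := by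
      rw [measure_union (hAdisj _ _ hi01) (hAmeas _), hfull, hfull]
    have hle : volume (A ⟨0, by omega⟩ ∪ A ⟨1, by omega⟩)
        ≤ ENNReal.ofReal (2 * π) := by
      rw [← AddCircle.measure_univ (2 * π)]
      exact measure_mono (Set.subset_univ _)
    rw [hun] at hle
    have hlt : ENNReal.ofReal (2 * π) < ENNReal.ofReal (2 * π) + ENNReal.ofReal (2 * π) :=
      ENNReal.lt_add_right ENNReal.ofReal_ne_top (by simp [hπ, Real.pi_pos])
    exact absurd hle (not_le.mpr hlt)
  -- analytic conclusion
  obtain ⟨i₀, j₀, hm0, hmlt⟩ := hsplit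
  have hterm_nonneg : ∀ i j, 0 ≤ (m i j).toReal / (2 * π) *
      Real.log (((volume (B i)).toReal / (2 * π)) / ((m i j).toReal / (2 * π))) := by
    intro i j
    rcases eq_or_ne ((m i j).toReal) 0 with h | h
    · rw [h]
      simp
    · have hmfin : m i j ≠ ⊤ := (lt_of_le_of_lt (hmle i j) (lt_top_iff_ne_top.mpr (hBfin i))).ne
      have hr : 0 < (m i j).toReal := lt_of_le_of_ne ENNReal.toReal_nonneg (Ne.symm h)
      have hR : (m i j).toReal ≤ (volume (B i)).toReal :=
        ENNReal.toReal_mono (hBfin i) (hmle i j)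
      apply mul_nonneg (by positivity)
      apply Real.log_nonneg
      rw [one_le_div (by positivity : (0:ℝ) < (m i j).toReal / (2 * π))]
      gcongr
  have hterm_pos : 0 < (m i₀ j₀).toReal / (2 * π) *
      Real.log (((volume (B i₀)).toReal / (2 * π)) / ((m i₀ j₀).toReal / (2 * π))) := by
    have hmfin : m i₀ j₀ ≠ ⊤ :=
      (lt_of_le_of_lt (hmle i₀ j₀) (lt_top_iff_ne_top.mpr (hBfin i₀))).ne
    have hr : 0 < (m i₀ j₀).toReal := ENNReal.toReal_pos hm0.ne' hmfin
    have hR : (m i₀ j₀).toReal < (volume (B i₀)).toReal :=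
      ENNReal.toReal_strict_mono (hBfin i₀) hmlt
    apply mul_pos (by positivity)
    apply Real.log_pos
    rw [one_lt_div (by positivity : (0:ℝ) < (m i₀ j₀).toReal / (2 * π))]
    gcongr
  apply Finset.sum_pos'
  · intro i _
    exact Finset.sum_nonneg fun j _ => hterm_nonneg i j
  · exact ⟨i₀, Finset.mem_univ _,
      Finset.sum_pos' (fun j _ => hterm_nonneg i₀ j) ⟨j₀, Finset.mem_univ _, hterm_pos⟩⟩
end

section
/- Let ν be irrational. For each positive integer l let D_l = −s_l log s_l − (1−s_l) log(1−s_l) with s_l = lν − ⌊lν⌋ be the entropic chaos degree of the rotation R_ν(x) = x + 2πν (mod 2π) with respect to the equi-partition of [0,2π) into l intervals of equal length. Then the infimum over all equi-partitions vanishes: inf { D_l : l ∈ ℕ, l ≥ 1 } = 0 (while each D_l > 0). -/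
open Real

/-- The binary (Shannon) entropy `H(s) = −s log s − (1−s) log(1−s)` (natural log,
convention `0 · log 0 = 0`). -/
noncomputable def binEnt (s : ℝ) : ℝ :=
  -s * Real.log s - (1 - s) * Real.log (1 - s)

lemma binEnt_eq (s : ℝ) : binEnt s = Real.negMulLog s + Real.negMulLog (1 - s) := by
  simp [binEnt, Real.negMulLog]; ring

lemma binEnt_continuous : Continuous binEnt := by
  have h : binEnt = fun s => Real.negMulLog s + Real.negMulLog (1 - s) := funext binEnt_eq
  rw [h]; fun_prop

@[simp] lemma binEnt_zero : binEnt 0 = 0 := by simp [binEnt]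

lemma binEnt_symm (s : ℝ) : binEnt (1 - s) = binEnt s := by
  simp [binEnt_eq]; ring

lemma binEnt_pos {s : ℝ} (h0 : 0 < s) (h1 : s < 1) : 0 < binEnt s := by
  have l1 : Real.log s < 0 := Real.log_neg h0 h1
  have l2 : Real.log (1 - s) < 0 := Real.log_neg (by linarith) (by linarith)
  have : 0 < -s * Real.log s := by nlinarith
  have : 0 < -(1 - s) * Real.log (1 - s) := by nlinarith
  unfold binEnt; nlinarith

lemma binEnt_nonneg {s : ℝ} (h0 : 0 ≤ s) (h1 : s ≤ 1) : 0 ≤ binEnt s := by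
  rw [binEnt_eq]
  exact add_nonneg (Real.negMulLog_nonneg h0 h1)
    (Real.negMulLog_nonneg (by linarith) (by linarith))

/-- The subgroup `{m + nν : m n ∈ ℤ}` of `ℝ`. -/
def nuGroup (ν : ℝ) : AddSubgroup ℝ where
  carrier := {x | ∃ m n : ℤ, x = m + n * ν}
  zero_mem' := ⟨0, 0, by simp⟩
  add_mem' := by
    rintro a b ⟨m, n, rfl⟩ ⟨m', n', rfl⟩
    exact ⟨m + m', n + n', by push_cast; ring⟩
  neg_mem' := by
    rintro a ⟨m, n, rfl⟩
    exact ⟨-m, -n, by push_cast; ring⟩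

lemma nuGroup_dense {ν : ℝ} (hν : Irrational ν) : Dense ((nuGroup ν : AddSubgroup ℝ) : Set ℝ) := by
  rcases (nuGroup ν).dense_or_cyclic with h | ⟨a, ha⟩
  · exact h
  · exfalso
    have h1 : (1 : ℝ) ∈ nuGroup ν := ⟨1, 0, by simp⟩
    have h2 : ν ∈ nuGroup ν := ⟨0, 1, by simp⟩
    rw [ha] at h1 h2
    obtain ⟨m, hm⟩ := AddSubgroup.mem_closure_singleton.mp h1
    obtain ⟨n, hn⟩ := AddSubgroup.mem_closure_singleton.mp h2
    rw [zsmul_eq_mul] at hm hn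
    have hm0 : m ≠ 0 := by
      rintro rfl; simp at hm
    have key : (m : ℝ) * ν = n := by
      calc (m : ℝ) * ν = (m : ℝ) * ((n : ℝ) * a) := by rw [hn]
        _ = (n : ℝ) * ((m : ℝ) * a) := by ring
        _ = n := by rw [hm, mul_one]
    exact (hν.intCast_mul hm0).ne_int n key

lemma exists_small_fract {ν : ℝ} (hν : Irrational ν) {δ : ℝ} (hδ0 : 0 < δ) (hδ1 : δ < 1) :
    ∃ l : ℕ, 1 ≤ l ∧ ∃ x : ℝ, 0 < x ∧ x < δ ∧
      binEnt (Int.fract ((l : ℝ) * ν)) = binEnt x := by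
  obtain ⟨g, hgS, hg⟩ := (nuGroup_dense hν).exists_mem_open isOpen_Ioo
    (⟨δ / 2, by constructor <;> linarith⟩ : Set.Nonempty (Set.Ioo 0 δ))
  obtain ⟨hg0, hgδ⟩ := hg
  obtain ⟨m, n, rfl⟩ := hgS
  set g : ℝ := (m : ℝ) + (n : ℝ) * ν with hgdef
  have hg1 : g < 1 := lt_trans hgδ hδ1
  have hfg : Int.fract g = g := Int.fract_eq_self.mpr ⟨le_of_lt hg0, hg1⟩
  have hn0 : n ≠ 0 := by
    rintro rfl
    simp only [Int.cast_zero, zero_mul, add_zero] at hgdef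
    rw [hgdef] at hg0 hg1
    have : (0 : ℤ) < m := by exact_mod_cast hg0
    have : m < 1 := by exact_mod_cast hg1
    omega
  rcases lt_or_gt_of_ne hn0 with hneg | hpos
  · -- n < 0 : use l = (-n).toNat, fract(lν) = 1 - g
    refine ⟨(-n).toNat, by omega, g, hg0, hgδ, ?_⟩
    have hcast : ((((-n).toNat : ℕ)) : ℝ) = -(n : ℝ) := by
      have : ((-n).toNat : ℤ) = -n := Int.toNat_of_nonneg (by omega)
      exact_mod_cast this
    rw [hcast]
    have heq : -(n : ℝ) * ν = (m : ℝ) - g := by rw [hgdef]; ring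
    rw [heq]
    have : Int.fract ((m : ℝ) - g) = Int.fract (-g) := by
      rw [sub_eq_add_neg, Int.fract_intCast_add]
    rw [this, Int.fract_neg (by rw [hfg]; exact ne_of_gt hg0), hfg, binEnt_symm]
  · -- n > 0 : use l = n.toNat, fract(lν) = g
    refine ⟨n.toNat, by omega, g, hg0, hgδ, ?_⟩
    have hcast : (((n.toNat : ℕ)) : ℝ) = (n : ℝ) := by
      have : (n.toNat : ℤ) = n := Int.toNat_of_nonneg (by omega)
      exact_mod_cast this
    rw [hcast]
    have heq : (n : ℝ) * ν = g - (m : ℝ) := by rw [hgdef]; ring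
    rw [heq, Int.fract_sub_intCast, hfg]

/-- Proposition 4.1: for irrational `ν`, the entropic chaos degree of the rotation
`R_ν(x) = x + 2πν (mod 2π)` with respect to the equi-partition of `[0,2π)` into `l`
intervals is `D_l = H(lν − ⌊lν⌋)`; the infimum of `D_l` over all equi-partition sizes
`l ≥ 1` is `0`, although each `D_l` is strictly positive. -/
theorem inf_ecd_equipartitions_eq_zero (ν : ℝ) (hν : Irrational ν) :
    sInf {d : ℝ | ∃ l : ℕ, 1 ≤ l ∧ d = binEnt (Int.fract ((l : ℝ) * ν))} = 0 ∧
      ∀ l : ℕ, 1 ≤ l → 0 < binEnt (Int.fract ((l : ℝ) * ν)) := by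
  have hfract : ∀ l : ℕ, 1 ≤ l → 0 < Int.fract ((l : ℝ) * ν) ∧ Int.fract ((l : ℝ) * ν) < 1 := by
    intro l hl
    refine ⟨?_, Int.fract_lt_one _⟩
    rcases lt_or_eq_of_le (Int.fract_nonneg ((l : ℝ) * ν)) with h | h
    · exact h
    · exfalso
      have hirr : Irrational ((l : ℝ) * ν) := hν.natCast_mul (by omega)
      have : (l : ℝ) * ν = (⌊(l : ℝ) * ν⌋ : ℝ) := by
        have h2 := Int.floor_add_fract ((l : ℝ) * ν)
        rw [← h] at h2
        linarith
      exact hirr.ne_int _ this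
  have hpos : ∀ l : ℕ, 1 ≤ l → 0 < binEnt (Int.fract ((l : ℝ) * ν)) := by
    intro l hl
    obtain ⟨h0, h1⟩ := hfract l hl
    exact binEnt_pos h0 h1
  refine ⟨?_, hpos⟩
  set D : Set ℝ := {d : ℝ | ∃ l : ℕ, 1 ≤ l ∧ d = binEnt (Int.fract ((l : ℝ) * ν))} with hD
  have hne : D.Nonempty := ⟨binEnt (Int.fract (((1 : ℕ) : ℝ) * ν)), 1, le_refl 1, by norm_num⟩
  have hbdd : BddBelow D := by
    refine ⟨0, ?_⟩
    rintro d ⟨l, hl, rfl⟩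
    exact le_of_lt (hpos l hl)
  have h0le : 0 ≤ sInf D := by
    apply le_csInf hne
    rintro d ⟨l, hl, rfl⟩
    exact le_of_lt (hpos l hl)
  have hle0 : ∀ ε : ℝ, 0 < ε → sInf D < ε := by
    intro ε hε
    -- continuity of binEnt at 0
    have hc : ContinuousAt binEnt 0 := binEnt_continuous.continuousAt
    rw [Metric.continuousAt_iff] at hc
    obtain ⟨δ, hδ0, hδ⟩ := hc ε hε
    obtain ⟨l, hl, x, hx0, hxδ, hbe⟩ := exists_small_fract hν
      (show (0:ℝ) < min δ (1/2) by positivity)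
      (show min δ (1/2) < 1 by
        calc min δ (1/2) ≤ 1/2 := min_le_right _ _
          _ < 1 := by norm_num)
    have hxsmall : dist x 0 < δ := by
      rw [Real.dist_eq, sub_zero, abs_of_pos hx0]
      exact lt_of_lt_of_le hxδ (min_le_left _ _)
    have := hδ hxsmall
    rw [Real.dist_eq, binEnt_zero, sub_zero] at this
    have hlt : binEnt x < ε := lt_of_le_of_lt (le_abs_self _) this
    calc sInf D ≤ binEnt (Int.fract ((l : ℝ) * ν)) := csInf_le hbdd ⟨l, hl, rfl⟩
      _ = binEnt x := hbe
      _ < ε := hlt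
  by_contra hne0
  have h0lt : 0 < sInf D := lt_of_le_of_ne h0le (Ne.symm hne0)
  exact absurd (hle0 _ h0lt) (lt_irrefl _)
end
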